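/- There exists a constant C > 0 such that for every integer m ≥ 1 and all real numbers x₀ and s, the number of integers k with 0 ≤ k < m and |s + 2π sin(2π(x₀+k)/m)| < 5π/m is at most C·√m. -/

import Mathlib

open Real



/-- Combinatorial lemma: points in `range m` with pairwise circular distance ≤ t. -/
lemma lemA (m t : ℕ) (S : Finset ℕ) (hS : S ⊆ Finset.range m)
    (h : ∀ k ∈ S, ∀ k' ∈ S, k' ≤ k → min (k - k') (m - (k - k')) ≤ t) :
    S.card ≤ 2 * t + 2 := by
  rcases S.eq_empty_or_nonempty with rfl | hne
  · simp
  · set p := S.min' hne with hp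
    have hpS : p ∈ S := S.min'_mem hne
    have hsub : S ⊆ Finset.Icc p (p + t) ∪ Finset.Ico (m - t) m := by
      intro k hk
      have hpk : p ≤ k := S.min'_le k hk
      have hkm : k < m := Finset.mem_range.mp (hS hk)
      have := h k hk p hpS hpk
      rcases min_le_iff.mp this with h1 | h2
      · exact Finset.mem_union_left _ (Finset.mem_Icc.mpr ⟨hpk, by omega⟩)
      · exact Finset.mem_union_right _ (Finset.mem_Ico.mpr ⟨by omega, hkm⟩)
    calc S.card ≤ _ := Finset.card_le_card hsub
      _ ≤ (Finset.Icc p (p + t)).card + (Finset.Ico (m - t) m).card := Finset.card_union_le _ _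
      _ ≤ 2 * t + 2 := by rw [Nat.card_Icc, Nat.card_Ico]; omega

lemma abs_sin_half (A B : ℝ) :
    |Real.sin ((A - B) / 2)| ≤ (|Real.sin A - Real.sin B| + |Real.cos A - Real.cos B|) / 2 := by
  have h1 := Real.sin_sub_sin A B
  have h2 := Real.cos_sub_cos A B
  have hc : Real.cos ((A + B) / 2) ^ 2 + Real.sin ((A + B) / 2) ^ 2 = 1 := by
    rw [add_comm]; exact Real.sin_sq_add_cos_sq _
  have e1 : |Real.sin A - Real.sin B| = 2 * |Real.sin ((A - B) / 2)| * |Real.cos ((A + B) / 2)| := by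
    rw [h1, abs_mul, abs_mul]; norm_num
  have e2 : |Real.cos A - Real.cos B| = 2 * |Real.sin ((A + B) / 2)| * |Real.sin ((A - B) / 2)| := by
    rw [h2, abs_mul, abs_mul]; rw [abs_neg]; norm_num
  rw [e1, e2]
  have hs1 : |Real.cos ((A + B) / 2)| + |Real.sin ((A + B) / 2)| ≥ 1 := by
    nlinarith [sq_abs (Real.cos ((A + B) / 2)), sq_abs (Real.sin ((A + B) / 2)),
      abs_nonneg (Real.cos ((A + B) / 2)), abs_nonneg (Real.sin ((A + B) / 2)),
      Real.abs_cos_le_one ((A + B) / 2), Real.abs_sin_le_one ((A + B) / 2)]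
  nlinarith [abs_nonneg (Real.sin ((A - B) / 2))]

/-- Jordan-type bound: `sin (π j / m) ≥ 2 * min j (m-j) / m` for `0 ≤ j ≤ m`. -/
lemma jordan_min (m j : ℕ) (hm : 1 ≤ m) (hj : j ≤ m) :
    2 * (min j (m - j) : ℝ) / m ≤ Real.sin (π * j / m) := by
  have hm' : (0:ℝ) < m := by exact_mod_cast hm
  have hπ := Real.pi_pos
  rcases le_or_gt (2 * j) m with hle | hlt
  · have hmin : (min (j:ℝ) ((m:ℝ) - j) : ℝ) = j := by
      apply min_eq_left
      have h2j : (2:ℝ) * j ≤ m := by exact_mod_cast hle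
      linarith
    rw [show (min j (m - j) : ℝ) = min (j:ℝ) ((m:ℝ) - j) from rfl, hmin]
    have h1 : (0:ℝ) ≤ π * j / m := by positivity
    have h2 : π * j / m ≤ π / 2 := by
      rw [div_le_div_iff₀ hm' (by norm_num)]
      have : (2:ℝ) * j ≤ m := by exact_mod_cast hle
      nlinarith
    have := Real.mul_le_sin h1 h2
    calc 2 * (j:ℝ) / m = 2 / π * (π * j / m) := by field_simp
      _ ≤ _ := this
  · have hmin : (min (j:ℝ) ((m:ℝ) - j) : ℝ) = (m:ℝ) - j := by
      apply min_eq_right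
      have h2j : (m:ℝ) < 2 * j := by exact_mod_cast hlt
      linarith
    rw [show (min j (m - j) : ℝ) = min (j:ℝ) ((m:ℝ) - j) from rfl, hmin]
    have heq : Real.sin (π * j / m) = Real.sin (π * ((m:ℝ) - j) / m) := by
      rw [show π * ((m:ℝ) - j) / m = π - π * j / m by field_simp, Real.sin_pi_sub]
    rw [heq]
    have h1 : (0:ℝ) ≤ π * ((m:ℝ) - j) / m := by
      have : (j:ℝ) ≤ m := by exact_mod_cast hj
      have h0 : (0:ℝ) ≤ (m:ℝ) - j := by linarith
      positivity
    have h2 : π * ((m:ℝ) - j) / m ≤ π / 2 := by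
      rw [div_le_div_iff₀ hm' (by norm_num)]
      have : (m:ℝ) < 2 * j := by exact_mod_cast hlt
      nlinarith
    have := Real.mul_le_sin h1 h2
    calc 2 * ((m:ℝ) - j) / m = 2 / π * (π * ((m:ℝ) - j) / m) := by field_simp
      _ ≤ _ := this

/-- Master counting lemma for a group with pairwise close sin/cos values. -/
lemma groupCard (m : ℕ) (hm : 1 ≤ m) (θ : ℕ → ℝ)
    (hθ : ∀ k k' : ℕ, θ k - θ k' = 2 * π * ((k:ℝ) - (k':ℝ)) / m)
    (S : Finset ℕ) (hS : S ⊆ Finset.range m) (ε : ℝ) (hε : 0 ≤ ε)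
    (h : ∀ k ∈ S, ∀ k' ∈ S,
      |Real.sin (θ k) - Real.sin (θ k')| + |Real.cos (θ k) - Real.cos (θ k')| ≤ ε) :
    (S.card : ℝ) ≤ m * ε / 2 + 4 := by
  have hm' : (0:ℝ) < m := by exact_mod_cast hm
  set t : ℕ := ⌈(m:ℝ) * ε / 4⌉₊ with ht
  have hcard : S.card ≤ 2 * t + 2 := by
    apply lemA m t S hS
    intro k hk k' hk' hkk
    rcases eq_or_lt_of_le hkk with rfl | hlt
    · simp
    · set j : ℕ := k - k' with hj
      have hj1 : 1 ≤ j := by omega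
      have hjm : j ≤ m := by
        have := Finset.mem_range.mp (hS hk); omega
      have hcast : ((j:ℝ)) = (k:ℝ) - (k':ℝ) := by
        rw [hj, Nat.cast_sub hkk]
      -- real bound on min
      have key : 2 * (min j (m - j) : ℝ) / m ≤ ε / 2 := by
        have h1 := jordan_min m j hm hjm
        have h2 : Real.sin (π * j / m) = |Real.sin ((θ k - θ k') / 2)| := by
          rw [hθ k k', ← hcast]
          rw [show 2 * π * (j:ℝ) / m / 2 = π * j / m by ring]
          rw [abs_of_nonneg]
          apply Real.sin_nonneg_of_nonneg_of_le_pi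
          · positivity
          · rw [div_le_iff₀ hm']
            have : (j:ℝ) ≤ m := by exact_mod_cast hjm
            nlinarith [Real.pi_pos]
        have h3 := abs_sin_half (θ k) (θ k')
        have h4 := h k hk k' hk'
        rw [h2] at h1
        linarith
      have hreal : (min j (m - j) : ℝ) ≤ (m:ℝ) * ε / 4 := by
        rw [div_le_div_iff₀ hm' (by norm_num)] at key
        nlinarith
      have hbridge : ((min j (m - j) : ℕ) : ℝ) = min (j:ℝ) ((m:ℝ) - j) := by
        rw [Nat.cast_min, Nat.cast_sub hjm]
      have h5 : ((min j (m - j) : ℕ) : ℝ) ≤ (t:ℝ) := by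
        rw [hbridge]; exact hreal.trans (Nat.le_ceil _)
      exact_mod_cast h5
  have htle : (t:ℝ) ≤ (m:ℝ) * ε / 4 + 1 := by
    have := Nat.ceil_lt_add_one (show (0:ℝ) ≤ (m:ℝ) * ε / 4 by positivity)
    linarith
  have : (S.card : ℝ) ≤ 2 * (t:ℝ) + 2 := by exact_mod_cast hcard
  linarith

/-- If two unit-circle points have close ordinates and abscissae ≥ δ, the abscissae are close. -/
lemma cosdiff (a b c d δ e : ℝ) (h1 : a^2 + b^2 = 1) (h2 : c^2 + d^2 = 1)
    (hb : δ ≤ b) (hd : δ ≤ d) (hδ : 0 < δ) (hac : |a - c| ≤ e) : |b - d| ≤ e / δ := by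
  have ha1 : a ≤ 1 := by nlinarith [sq_nonneg b]
  have ha2 : -1 ≤ a := by nlinarith [sq_nonneg b]
  have hc1 : c ≤ 1 := by nlinarith [sq_nonneg d]
  have hc2 : -1 ≤ c := by nlinarith [sq_nonneg d]
  have he : 0 ≤ e := le_trans (abs_nonneg _) hac
  rcases abs_le.mp hac with ⟨hl, hr⟩
  have hP1 : (a - c) * (a + c) ≤ 2 * e := by
    nlinarith [mul_nonneg (by linarith : (0:ℝ) ≤ e - (a - c)) (by linarith : (0:ℝ) ≤ 2 + (a + c)),
      mul_nonneg (by linarith : (0:ℝ) ≤ e + (a - c)) (by linarith : (0:ℝ) ≤ 2 - (a + c))]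
  have hP2 : -(2 * e) ≤ (a - c) * (a + c) := by
    nlinarith [mul_nonneg (by linarith : (0:ℝ) ≤ e - (a - c)) (by linarith : (0:ℝ) ≤ 2 - (a + c)),
      mul_nonneg (by linarith : (0:ℝ) ≤ e + (a - c)) (by linarith : (0:ℝ) ≤ 2 + (a + c))]
  have hdb : d - b ≤ e / δ := by
    rw [le_div_iff₀ hδ]
    rcases le_total d b with h | h
    · nlinarith [mul_nonneg hδ.le (by linarith : (0:ℝ) ≤ b - d)]
    · nlinarith [mul_nonneg (by linarith : (0:ℝ) ≤ d - b) (by linarith : (0:ℝ) ≤ d + b - 2 * δ)]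
  have hbd : b - d ≤ e / δ := by
    rw [le_div_iff₀ hδ]
    rcases le_total b d with h | h
    · nlinarith [mul_nonneg hδ.le (by linarith : (0:ℝ) ≤ d - b)]
    · nlinarith [mul_nonneg (by linarith : (0:ℝ) ≤ b - d) (by linarith : (0:ℝ) ≤ d + b - 2 * δ)]
  rw [abs_le]
  constructor <;> linarith

/-- Near a critical point: both coordinates are close. -/
lemma near_crit (a b c d δ : ℝ) (h1 : a^2 + b^2 = 1) (h2 : c^2 + d^2 = 1)
    (hb : |b| ≤ δ) (hd : |d| ≤ δ) (ha : 0 ≤ a) (hc : 0 ≤ c) (hδ0 : 0 ≤ δ) (hδ : δ ≤ 1/2) :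
    |a - c| ≤ 2 * δ^2 ∧ |b - d| ≤ 2 * δ := by
  rcases abs_le.mp hb with ⟨hb1, hb2⟩
  rcases abs_le.mp hd with ⟨hd1, hd2⟩
  have ha2 : 1 - δ^2 ≤ a^2 := by nlinarith
  have hc2 : 1 - δ^2 ≤ c^2 := by nlinarith
  have ha3 : 1/2 ≤ a := by nlinarith
  have hc3 : 1/2 ≤ c := by nlinarith
  constructor
  · rw [abs_le]; constructor <;> nlinarith
  · rw [abs_le]; constructor <;> nlinarith


/-- There is a constant `C > 0` such that for every `m ≥ 1` and all real
`x₀, s`, the number of integers `0 ≤ k < m` with `|s + 2π sin(2π(x₀+k)/m)| < 5π/m` is at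
most `C √m`. -/
theorem stmt13 :
    ∃ C > 0, ∀ m : ℕ, 1 ≤ m → ∀ x₀ s : ℝ,
      (((Finset.range m).filter fun k : ℕ =>
          |s + 2 * π * Real.sin (2 * π * (x₀ + (k : ℝ)) / m)| < 5 * π / m).card : ℝ) ≤
        C * Real.sqrt m := by
  refine ⟨100, by norm_num, ?_⟩
  intro m hm x₀ s
  have hm' : (0:ℝ) < m := by exact_mod_cast hm
  have hπ := Real.pi_pos
  have h100 : Real.sqrt 10000 = 100 := by
    rw [show (10000:ℝ) = 100^2 by norm_num, Real.sqrt_sq (by norm_num)]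
  set B := (Finset.range m).filter (fun k : ℕ =>
      |s + 2 * π * Real.sin (2 * π * (x₀ + (k : ℝ)) / m)| < 5 * π / m) with hB
  rcases le_or_gt (m : ℝ) 10000 with hsmall | hbig
  · -- trivial bound for small m
    have h1 : (B.card : ℝ) ≤ m := by
      have h2 : B.card ≤ m := by
        simpa using Finset.card_filter_le (Finset.range m) _
      exact_mod_cast h2
    have h2 : Real.sqrt m ≤ 100 := by
      rw [← h100]; exact Real.sqrt_le_sqrt hsmall
    have h3 : (m:ℝ) = Real.sqrt m * Real.sqrt m := (Real.mul_self_sqrt hm'.le).symm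
    nlinarith [Real.sqrt_nonneg (m:ℝ)]
  · -- main case
    have hsq : Real.sqrt m * Real.sqrt m = m := Real.mul_self_sqrt hm'.le
    have hsm : (100:ℝ) ≤ Real.sqrt m := by
      rw [← h100]; exact Real.sqrt_le_sqrt hbig.le
    have hsqpos : (0:ℝ) < Real.sqrt m := by linarith
    set θ : ℕ → ℝ := fun k => 2 * π * (x₀ + (k : ℝ)) / m with hθdef
    set δ : ℝ := 1 / Real.sqrt m with hδdef
    have hδpos : 0 < δ := by positivity
    have hδle : δ ≤ 1/100 := by
      rw [hδdef, div_le_div_iff₀ hsqpos (by norm_num)]; linarith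
    have hinvδ : 1 / δ = Real.sqrt m := by rw [hδdef, one_div_one_div]
    have hmδ : (m:ℝ) * δ = Real.sqrt m := by
      rw [hδdef, mul_one_div, Real.div_sqrt]
    have hmδ2 : (m:ℝ) * δ^2 = 1 := by
      rw [pow_two, ← mul_assoc, hmδ, hδdef, mul_one_div, div_self hsqpos.ne']
    have hθ : ∀ k k' : ℕ, θ k - θ k' = 2 * π * ((k:ℝ) - (k':ℝ)) / m := by
      intro k k'; simp only [hθdef]; field_simp; ring
    have hmemB : ∀ k ∈ B, |s + 2 * π * Real.sin (θ k)| < 5 * π / m := by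
      intro k hk
      have := (Finset.mem_filter.mp hk).2
      simpa [hθdef] using this
    have hBrange : B ⊆ Finset.range m := Finset.filter_subset _ _
    -- sin-difference bound on B
    have hsin : ∀ k ∈ B, ∀ k' ∈ B, |Real.sin (θ k) - Real.sin (θ k')| ≤ 5 / m := by
      intro k hk k' hk'
      have h1 := hmemB k hk
      have h2 := hmemB k' hk'
      have h3 : |2 * π * Real.sin (θ k) - 2 * π * Real.sin (θ k')| < 10 * π / m := by
        calc |2 * π * Real.sin (θ k) - 2 * π * Real.sin (θ k')|
            = |(s + 2 * π * Real.sin (θ k)) + -(s + 2 * π * Real.sin (θ k'))| := by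
              congr 1; ring
          _ ≤ |s + 2 * π * Real.sin (θ k)| + |-(s + 2 * π * Real.sin (θ k'))| := abs_add_le _ _
          _ = |s + 2 * π * Real.sin (θ k)| + |s + 2 * π * Real.sin (θ k')| := by rw [abs_neg]
          _ < 10 * π / m := by
              have : 10 * π / (m:ℝ) = 5 * π / m + 5 * π / m := by ring
              linarith
      have h4 : (2 * π) * |Real.sin (θ k) - Real.sin (θ k')| < (2 * π) * (5 / m) := by
        rw [show (2 * π) * (5 / m) = 10 * π / m by ring, ← abs_of_pos (show (0:ℝ) < 2 * π by linarith), ← abs_mul]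
        calc |2 * π * (Real.sin (θ k) - Real.sin (θ k'))|
            = |2 * π * Real.sin (θ k) - 2 * π * Real.sin (θ k')| := by congr 1; ring
          _ < _ := h3
      exact (mul_lt_mul_iff_right₀ (by linarith)).mp h4 |>.le
    classical
    set S1 := B.filter (fun k => δ ≤ Real.cos (θ k)) with hS1
    set S2 := B.filter (fun k => Real.cos (θ k) ≤ -δ) with hS2
    set S3 := (Finset.range m).filter
      (fun k => |Real.cos (θ k)| < δ ∧ 0 ≤ Real.sin (θ k)) with hS3
    set S4 := (Finset.range m).filter
      (fun k => |Real.cos (θ k)| < δ ∧ Real.sin (θ k) < 0) with hS4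
    have hsub : B ⊆ (S1 ∪ S2) ∪ (S3 ∪ S4) := by
      intro k hk
      rcases le_or_gt δ (Real.cos (θ k)) with h | h
      · exact Finset.mem_union_left _
          (Finset.mem_union_left _ (Finset.mem_filter.mpr ⟨hk, h⟩))
      rcases le_or_gt (Real.cos (θ k)) (-δ) with h2 | h2
      · exact Finset.mem_union_left _
          (Finset.mem_union_right _ (Finset.mem_filter.mpr ⟨hk, h2⟩))
      have habs : |Real.cos (θ k)| < δ := abs_lt.mpr ⟨by linarith, h⟩
      rcases le_or_gt 0 (Real.sin (θ k)) with h3 | h3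
      · exact Finset.mem_union_right _
          (Finset.mem_union_left _ (Finset.mem_filter.mpr ⟨hBrange hk, habs, h3⟩))
      · exact Finset.mem_union_right _
          (Finset.mem_union_right _ (Finset.mem_filter.mpr ⟨hBrange hk, habs, h3⟩))
    have hcard : (B.card : ℝ) ≤ S1.card + S2.card + S3.card + S4.card := by
      have h1 : B.card ≤ S1.card + S2.card + S3.card + S4.card := by
        calc B.card ≤ ((S1 ∪ S2) ∪ (S3 ∪ S4)).card := Finset.card_le_card hsub
          _ ≤ (S1 ∪ S2).card + (S3 ∪ S4).card := Finset.card_union_le _ _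
          _ ≤ (S1.card + S2.card) + (S3.card + S4.card) :=
              Nat.add_le_add (Finset.card_union_le _ _) (Finset.card_union_le _ _)
          _ = _ := by ring
      exact_mod_cast h1
    -- bound on S1
    have hb1 : (S1.card : ℝ) ≤ (m:ℝ) * (5 / m + 5 / m / δ) / 2 + 4 := by
      apply groupCard m hm θ hθ S1 ((Finset.filter_subset _ _).trans hBrange)
      · positivity
      · intro k hk k' hk'
        have hkB := Finset.mem_filter.mp hk
        have hk'B := Finset.mem_filter.mp hk'
        have hs := hsin k hkB.1 k' hk'B.1
        have hc := cosdiff (Real.sin (θ k)) (Real.cos (θ k)) (Real.sin (θ k'))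
          (Real.cos (θ k')) δ (5 / m) (Real.sin_sq_add_cos_sq _) (Real.sin_sq_add_cos_sq _)
          hkB.2 hk'B.2 hδpos hs
        linarith
    -- bound on S2
    have hb2 : (S2.card : ℝ) ≤ (m:ℝ) * (5 / m + 5 / m / δ) / 2 + 4 := by
      apply groupCard m hm θ hθ S2 ((Finset.filter_subset _ _).trans hBrange)
      · positivity
      · intro k hk k' hk'
        have hkB := Finset.mem_filter.mp hk
        have hk'B := Finset.mem_filter.mp hk'
        have hs := hsin k hkB.1 k' hk'B.1
        have hc := cosdiff (Real.sin (θ k)) (-Real.cos (θ k)) (Real.sin (θ k'))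
          (-Real.cos (θ k')) δ (5 / m)
          (by rw [neg_pow]; simpa using Real.sin_sq_add_cos_sq (θ k))
          (by rw [neg_pow]; simpa using Real.sin_sq_add_cos_sq (θ k'))
          (by linarith [hkB.2]) (by linarith [hk'B.2]) hδpos hs
        have hc2 : |Real.cos (θ k) - Real.cos (θ k')| ≤ 5 / m / δ := by
          calc |Real.cos (θ k) - Real.cos (θ k')|
              = |(-Real.cos (θ k)) - (-Real.cos (θ k'))| := by rw [← abs_neg]; congr 1; ring
            _ ≤ _ := hc
        linarith
    -- bound on S3
    have hb3 : (S3.card : ℝ) ≤ (m:ℝ) * (2 * δ^2 + 2 * δ) / 2 + 4 := by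
      apply groupCard m hm θ hθ S3 (Finset.filter_subset _ _)
      · positivity
      · intro k hk k' hk'
        have hkB := Finset.mem_filter.mp hk
        have hk'B := Finset.mem_filter.mp hk'
        have hnc := near_crit (Real.sin (θ k)) (Real.cos (θ k)) (Real.sin (θ k'))
          (Real.cos (θ k')) δ (Real.sin_sq_add_cos_sq _) (Real.sin_sq_add_cos_sq _)
          hkB.2.1.le hk'B.2.1.le hkB.2.2 hk'B.2.2 hδpos.le (by linarith)
        linarith [hnc.1, hnc.2]
    -- bound on S4
    have hb4 : (S4.card : ℝ) ≤ (m:ℝ) * (2 * δ^2 + 2 * δ) / 2 + 4 := by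
      apply groupCard m hm θ hθ S4 (Finset.filter_subset _ _)
      · positivity
      · intro k hk k' hk'
        have hkB := Finset.mem_filter.mp hk
        have hk'B := Finset.mem_filter.mp hk'
        have hnc := near_crit (-Real.sin (θ k)) (Real.cos (θ k)) (-Real.sin (θ k'))
          (Real.cos (θ k')) δ
          (by rw [neg_pow]; simpa using Real.sin_sq_add_cos_sq (θ k))
          (by rw [neg_pow]; simpa using Real.sin_sq_add_cos_sq (θ k'))
          hkB.2.1.le hk'B.2.1.le (by linarith [hkB.2.2]) (by linarith [hk'B.2.2])
          hδpos.le (by linarith)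
        have hs2 : |Real.sin (θ k) - Real.sin (θ k')| ≤ 2 * δ^2 := by
          calc |Real.sin (θ k) - Real.sin (θ k')|
              = |(-Real.sin (θ k)) - (-Real.sin (θ k'))| := by rw [← abs_neg]; congr 1; ring
            _ ≤ _ := hnc.1
        linarith [hnc.2]
    -- combine
    have e1 : (m:ℝ) * (5 / m + 5 / m / δ) / 2 + 4 ≤ 3 * Real.sqrt m := by
      have : (m:ℝ) * (5 / m + 5 / m / δ) = 5 + 5 * (1/δ) := by field_simp
      rw [this, hinvδ]; linarith
    have e2 : (m:ℝ) * (2 * δ^2 + 2 * δ) / 2 + 4 ≤ 2 * Real.sqrt m := by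
      have : (m:ℝ) * (2 * δ^2 + 2 * δ) = 2 * ((m:ℝ) * δ^2) + 2 * ((m:ℝ) * δ) := by ring
      rw [this, hmδ, hmδ2]; linarith
    calc (B.card : ℝ) ≤ S1.card + S2.card + S3.card + S4.card := hcard
      _ ≤ 3 * Real.sqrt m + 3 * Real.sqrt m + 2 * Real.sqrt m + 2 * Real.sqrt m := by linarith
      _ ≤ 100 * Real.sqrt m := by linarith
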